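/- arXiv:2208.09380 — 9 statements merged into one kernel-verified Lean document; each statement's English description precedes it below -/
import Mathlib

section
/- Let ⟨f_β : β < α⟩ be a <*-increasing sequence in ∏_{i<λ} μ_i with cf(α) > λ, and suppose A ⊆ α witnesses goodness of α. Then the pointwise supremum f_A is an exact upper bound of ⟨f_β : β ∈ A⟩: it is a <*-upper bound, and every g <* f_A satisfies g <* f_β for some β < α. -/
open Cardinal Set

/-- The set of ordinals `A` has order type `ξ`: it is the image of `ξ` under a
strictly monotone map. -/
def HasOtype (A : Set Ordinal) (ξ : Ordinal) : Prop :=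
  ∃ e : Ordinal → Ordinal, StrictMonoOn e (Set.Iio ξ) ∧ A = e '' Set.Iio ξ

/-- `α` is a limit point of the set of ordinals `C`. -/
def IsLimPt (C : Set Ordinal) (α : Ordinal) : Prop :=
  0 < α ∧ ∀ β < α, ∃ γ ∈ C, β < γ ∧ γ < α

/-- `A` is an unbounded subset of `α`. -/
def Unbdd (A : Set Ordinal) (α : Ordinal) : Prop :=
  A ⊆ Set.Iio α ∧ ∀ β < α, ∃ γ ∈ A, β < γ

/-- `C` is a club (closed unbounded) subset of `κ`. -/
def IsClubOrd (C : Set Ordinal) (κ : Ordinal) : Prop :=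
  C ⊆ Set.Iio κ ∧ (∀ α < κ, IsLimPt C α → α ∈ C) ∧ ∀ β < κ, ∃ γ ∈ C, β < γ

/-- `S` is a stationary subset of `κ`. -/
def IsStat (S : Set Ordinal) (κ : Ordinal) : Prop :=
  ∀ C, IsClubOrd C κ → (S ∩ C).Nonempty

/-- `f <* g` : eventual pointwise domination below `lam`. -/
def evLT (lam : Ordinal) (f g : Ordinal → Ordinal) : Prop :=
  ∃ j < lam, ∀ i, j ≤ i → i < lam → f i < g i

/-- `A` witnesses goodness of `α` for the sequence `f`. -/
def GoodWit (lam α : Ordinal) (f : Ordinal → Ordinal → Ordinal) (A : Set Ordinal) : Prop :=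
  Unbdd A α ∧ HasOtype A α.cof.ord ∧
    ∃ j < lam, ∀ i, j ≤ i → i < lam → ∀ β ∈ A, ∀ γ ∈ A, β < γ → f β i < f γ i

/-- The pointwise supremum `f_A`. -/
noncomputable def ptSup (f : Ordinal → Ordinal → Ordinal) (A : Set Ordinal) (i : Ordinal) :
    Ordinal := sSup ((fun β => f β i) '' A)
/-- the pointwise supremum over a set witnessing goodness is an exact upper bound. -/
theorem stmt_5 (lam : Cardinal) (hlam : lam.IsRegular) (hω : ℵ₀ < lam)
    (μ : Ordinal → Cardinal) (hμreg : ∀ i < lam.ord, (μ i).IsRegular)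
    (α : Ordinal) (hcofα : lam < α.cof)
    (f : Ordinal → Ordinal → Ordinal)
    (hprod : ∀ β < α, ∀ i < lam.ord, f β i < (μ i).ord)
    (hinc : ∀ β γ, β < γ → γ < α → evLT lam.ord (f β) (f γ))
    (A : Set Ordinal) (hA : GoodWit lam.ord α f A) :
    (∀ β < α, evLT lam.ord (f β) (ptSup f A)) ∧
      ∀ g : Ordinal → Ordinal, evLT lam.ord g (ptSup f A) →
        ∃ β < α, evLT lam.ord g (f β) := by
  obtain ⟨⟨hAsub, hAunb⟩, -, j₁, hj₁, hgood⟩ := hA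
  have hα0 : 0 < α := by
    refine pos_iff_ne_zero.2 ?_
    rintro rfl
    rw [Ordinal.cof_zero] at hcofα
    exact lam.zero_le.not_gt hcofα
  have hbdd : ∀ i < lam.ord, BddAbove ((fun β => f β i) '' A) := by
    intro i hi
    refine ⟨(μ i).ord, ?_⟩
    rintro x ⟨β, hβ, rfl⟩
    exact (hprod β (hAsub hβ) i hi).le
  have hle : ∀ i < lam.ord, ∀ β ∈ A, f β i ≤ ptSup f A i := by
    intro i hi β hβ
    exact le_csSup (hbdd i hi) ⟨β, hβ, rfl⟩
  constructor
  · intro β hβ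
    obtain ⟨γ, hγA, hβγ⟩ := hAunb β hβ
    obtain ⟨j, hj, hdom⟩ := hinc β γ hβγ (hAsub hγA)
    exact ⟨j, hj, fun i hji hilam => lt_of_lt_of_le (hdom i hji hilam) (hle i hilam γ hγA)⟩
  · rintro g ⟨j₀, hj₀, hg⟩
    obtain ⟨γ₀, hγ₀⟩ := hAunb 0 hα0
    set J := max j₀ j₁ with hJ
    have hJlam : J < lam.ord := max_lt hj₀ hj₁
    have hP : ∀ i, ∃ β, β ∈ A ∧ (J ≤ i → i < lam.ord → g i < f β i) := by
      intro i
      by_cases h : J ≤ i ∧ i < lam.ord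
      · have hgi : g i < ptSup f A i := hg i (le_trans (le_max_left _ _) h.1) h.2
        have hne : ((fun β => f β i) '' A).Nonempty := ⟨_, ⟨γ₀, hγ₀.1, rfl⟩⟩
        obtain ⟨x, ⟨β, hβ, rfl⟩, hx⟩ := exists_lt_of_lt_csSup hne hgi
        exact ⟨β, hβ, fun _ _ => hx⟩
      · exact ⟨γ₀, hγ₀.1, fun h1 h2 => absurd ⟨h1, h2⟩ h⟩
    choose F hFA hFg using hP
    have hbsup : Ordinal.bsup lam.ord (fun i _ => F i) < α := by
      apply Ordinal.bsup_lt_ord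
      · rwa [Cardinal.card_ord]
      · intro i hi
        exact hAsub (hFA i)
    obtain ⟨β, hβA, hβgt⟩ := hAunb _ hbsup
    refine ⟨β, hAsub hβA, J, hJlam, fun i hJi hilam => ?_⟩
    have h1 : g i < f (F i) i := hFg i hJi hilam
    have h2 : F i < β := lt_of_le_of_lt (Ordinal.le_bsup (fun i _ => F i) i hilam) hβgt
    exact h1.trans (hgood i (le_trans (le_max_right _ _) hJi) hilam (F i) (hFA i) β hβA h2)
end

section
/- Let ⟨f_β : β < α⟩ be a <*-increasing sequence in ∏_{i<λ} μ_i with cf(α) ≤ λ. Then ⟨f_β : β < α⟩ has no exact upper bound: for any upper bound f, there is g <* f such that g is not eventually dominated by any f_β with β < α. -/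
open Cardinal Set

/-- a `<*`-increasing sequence of length of cofinality `≤ λ` has no exact upper bound. -/
theorem stmt_6 (lam : Cardinal) (hlam : lam.IsRegular) (hω : ℵ₀ < lam)
    (μ : Ordinal → Cardinal) (hμreg : ∀ i < lam.ord, (μ i).IsRegular)
    (α : Ordinal) (hα : Order.IsSuccLimit α) (hcofα : α.cof ≤ lam)
    (f : Ordinal → Ordinal → Ordinal)
    (hprod : ∀ β < α, ∀ i < lam.ord, f β i < (μ i).ord)
    (hinc : ∀ β γ, β < γ → γ < α → evLT lam.ord (f β) (f γ)) :
    ∀ fub : Ordinal → Ordinal, (∀ β < α, evLT lam.ord (f β) fub) →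
      ∃ g : Ordinal → Ordinal, evLT lam.ord g fub ∧
        ∀ β < α, ¬ evLT lam.ord g (f β) := by
  classical
  intro fub hub
  set κ := lam.ord with hκdef
  have hκcard : κ.card = lam := Cardinal.card_ord lam
  have hκlim : Order.IsSuccLimit κ := Cardinal.isSuccLimit_ord hω.le
  have hmkT : #κ.ToType = lam := by rw [Cardinal.mk_toType, hκcard]
  -- pairing equiv
  have hmul : #(κ.ToType × κ.ToType) = #κ.ToType := by
    simp only [Cardinal.mk_prod, Cardinal.lift_id, hmkT]
    exact Cardinal.mul_eq_self hω.le
  obtain ⟨e⟩ : Nonempty (κ.ToType ≃ κ.ToType × κ.ToType) := ⟨(Cardinal.eq.mp hmul).some.symm⟩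
  set t := Ordinal.ToType.mk (o := κ) with htdef
  -- cofinal sequence in α
  obtain ⟨ι, F, hlsub, hcardι⟩ := Ordinal.exists_lsub_cof α
  have hι : Nonempty ι := by
    rw [← Cardinal.mk_ne_zero_iff, hcardι, Ordinal.cof_ne_zero]
    exact hα.pos.ne'
  have hFlt : ∀ x, F x < α := fun x => hlsub ▸ Ordinal.lt_lsub F x
  obtain ⟨jemb⟩ : Nonempty (ι ↪ κ.ToType) := by
    rw [← Cardinal.le_def, hcardι, hmkT]; exact hcofα
  set s : κ.ToType → ι := Function.invFun jemb with hsdef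
  have hs : ∀ x, s (jemb x) = x := fun x => Function.leftInverse_invFun jemb.injective x
  -- b : index → member of cofinal sequence
  set b : Ordinal → Ordinal := fun ξ =>
    if h : ξ < κ then F (s (t ⟨ξ, h⟩)) else 0 with hbdef
  have hblt : ∀ ξ < κ, b ξ < α := by
    intro ξ hξ; simp only [hbdef, dif_pos hξ]; exact hFlt _
  have hbcof : ∀ δ < α, ∃ ξ < κ, δ < b ξ := by
    intro δ hδ
    obtain ⟨x, hx⟩ := Ordinal.lt_lsub_iff.mp (hlsub ▸ hα.succ_lt hδ)
    refine ⟨(t.symm (jemb x) : Ordinal), (t.symm (jemb x)).2, ?_⟩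
    have h2 : ((t.symm (jemb x) : Ordinal)) < κ := (t.symm (jemb x)).2
    have : (⟨(t.symm (jemb x) : Ordinal), h2⟩ : Set.Iio κ) = t.symm (jemb x) := rfl
    simp only [hbdef, dif_pos h2, this]
    rw [OrderIso.apply_symm_apply, hs]
    exact (Order.succ_le_iff.mp hx)
  -- coloring
  set c : Ordinal → Ordinal := fun i =>
    if h : i < κ then ((t.symm (e (t ⟨i, h⟩)).1 : Ordinal)) else 0 with hcdef
  -- fibers of c are unbounded
  have hfiber : ∀ ξ, ξ < κ → ∀ β < κ, ∃ i, i < κ ∧ c i = ξ ∧ β < i := by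
    intro ξ hξ β hβ
    by_contra hcon
    push_neg at hcon
    -- injective map from κ.ToType into Iic β
    set m : κ.ToType → Ordinal := fun y => (t.symm (e.symm (t ⟨ξ, hξ⟩, y)) : Ordinal) with hmdef
    have hmlt : ∀ y, m y < κ := fun y => (t.symm (e.symm (t ⟨ξ, hξ⟩, y))).2
    have hmc : ∀ y, c (m y) = ξ := by
      intro y
      have h2 := hmlt y
      have : (⟨m y, h2⟩ : Set.Iio κ) = t.symm (e.symm (t ⟨ξ, hξ⟩, y)) := rfl
      simp only [hcdef, dif_pos h2, this]
      rw [OrderIso.apply_symm_apply, Equiv.apply_symm_apply]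
      simp
    have hmle : ∀ y, m y ≤ β := fun y => hcon (m y) (hmlt y) (hmc y)
    have hminj : Function.Injective m := by
      intro y1 y2 h
      have := t.symm.injective (Subtype.ext h)
      have := e.symm.injective this
      exact (Prod.ext_iff.mp this).2
    have hmlt' : ∀ y, m y < β + 1 := by
      intro y
      have := hmle y
      rw [Ordinal.add_one_eq_succ, Order.lt_succ_iff]
      exact this
    set m' : κ.ToType → (β + 1).ToType :=
      fun y => Ordinal.ToType.mk (o := β + 1) ⟨m y, hmlt' y⟩ with hm'def
    have hm'inj : Function.Injective m' := by
      intro y1 y2 h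
      apply hminj
      have h2 := (Ordinal.ToType.mk (o := β + 1)).injective h
      replace h2 := congrArg Subtype.val h2
      exact h2
    have hle : #κ.ToType ≤ #(β + 1).ToType := Cardinal.mk_le_of_injective hm'inj
    rw [hmkT, Cardinal.mk_toType] at hle
    have hsucc : β + 1 < κ := hκlim.succ_lt hβ
    rw [hκdef, Cardinal.lt_ord] at hsucc
    exact absurd hle (not_le.mpr hsucc)
  -- the function g
  set g : Ordinal → Ordinal := fun i =>
    if (i < κ ∧ f (b (c i)) i < fub i) then f (b (c i)) i else 0 with hgdef
  refine ⟨g, ?_, ?_⟩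
  · obtain ⟨j0, hj0κ, hj0⟩ := hub 0 hα.pos
    refine ⟨j0, hj0κ, fun i hji hiκ => ?_⟩
    have hpos : 0 < fub i := zero_le.trans_lt (hj0 i hji hiκ)
    by_cases h : (i < κ ∧ f (b (c i)) i < fub i)
    · simp only [hgdef, if_pos h]; exact h.2
    · simp only [hgdef, if_neg h]; exact hpos
  · rintro β hβ ⟨j1, hj1κ, hj1⟩
    obtain ⟨ξ, hξκ, hξb⟩ := hbcof β hβ
    have hγα : b ξ < α := hblt ξ hξκ
    obtain ⟨j2, hj2κ, hj2⟩ := hinc β (b ξ) hξb hγα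
    obtain ⟨j3, hj3κ, hj3⟩ := hub (b ξ) hγα
    obtain ⟨i, hiκ, hci, hJi⟩ := hfiber ξ hξκ (j1 ⊔ j2 ⊔ j3) (by
      simp only [sup_lt_iff]; exact ⟨⟨hj1κ, hj2κ⟩, hj3κ⟩)
    have hJ1 : j1 ≤ i := le_of_lt (lt_of_le_of_lt (le_sup_left.trans le_sup_left) hJi)
    have hJ2 : j2 ≤ i := le_of_lt (lt_of_le_of_lt (le_sup_right.trans le_sup_left) hJi)
    have hJ3 : j3 ≤ i := le_of_lt (lt_of_le_of_lt le_sup_right hJi)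
    have hcond : (i < κ ∧ f (b (c i)) i < fub i) := by
      rw [hci]; exact ⟨hiκ, hj3 i hJ3 hiκ⟩
    have hgi : g i = f (b ξ) i := by
      simp only [hgdef, if_pos hcond, hci]
    have h1 : g i < f β i := hj1 i hJ1 hiκ
    have h2 : f β i < f (b ξ) i := hj2 i hJ2 hiκ
    rw [hgi] at h1
    exact absurd (h1.trans h2) (lt_irrefl _)
end

section
/- Let ⟨f_β : β < α⟩ be a <*-increasing sequence in ∏_{i<λ} μ_i with cf(α) > λ. If A and B both witness goodness of α, then f_A =* f_B, i.e., there is j < λ such that f_A(i) = f_B(i) for all i ≥ j. -/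
open Cardinal Set

lemma half_aux (lam : Cardinal) (α : Ordinal) (hcofα : lam < α.cof)
    (f : Ordinal → Ordinal → Ordinal)
    (hinc : ∀ β γ, β < γ → γ < α → ∃ j < lam.ord, ∀ i, j ≤ i → i < lam.ord → f β i < f γ i)
    (A B : Set Ordinal) (hAu : A ⊆ Set.Iio α ∧ ∀ β < α, ∃ γ ∈ A, β < γ)
    (hBu : B ⊆ Set.Iio α ∧ ∀ β < α, ∃ γ ∈ B, β < γ)
    (jB : Ordinal) (hjB : jB < lam.ord)
    (hBinc : ∀ i, jB ≤ i → i < lam.ord → ∀ β ∈ B, ∀ γ ∈ B, β < γ → f β i < f γ i) :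
    ∃ j < lam.ord, ∀ i, j ≤ i → i < lam.ord → ∀ γ ∈ B, ∃ β ∈ A, f γ i < f β i := by
  have H : ∀ γ, γ ∈ B → ∃ β j, β ∈ A ∧ j < lam.ord ∧
      ∀ i, j ≤ i → i < lam.ord → f γ i < f β i := by
    intro γ hγ
    obtain ⟨β, hβA, hγβ⟩ := hAu.2 γ (hBu.1 hγ)
    obtain ⟨j, hj, hij⟩ := hinc γ β hγβ (hAu.1 hβA)
    exact ⟨β, j, hβA, hj, hij⟩
  choose g J hg hJ hgt using H
  have claim : ∃ j₀ < lam.ord, ∀ c < α, ∃ γ, ∃ h : γ ∈ B, c < γ ∧ J γ h ≤ j₀ := by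
    by_contra hcon
    push_neg at hcon
    choose c hc hcc using hcon
    have hcard : (lam.ord).card < α.cof := by rwa [Cardinal.card_ord]
    have hb := Ordinal.bsup_lt_ord hcard (f := fun j hj => c j hj) (fun j hj => hc j hj)
    obtain ⟨γ, hγB, hγ⟩ := hBu.2 _ hb
    have h1 : c (J γ hγB) (hJ γ hγB) ≤ Ordinal.bsup lam.ord fun j hj => c j hj :=
      Ordinal.le_bsup _ _ _
    have h2 := hcc (J γ hγB) (hJ γ hγB) γ hγB (lt_of_le_of_lt h1 hγ)
    exact absurd le_rfl (not_le.2 h2)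
  obtain ⟨j₀, hj₀, hub⟩ := claim
  refine ⟨max jB j₀, max_lt hjB hj₀, fun i hi hilt γ hγ => ?_⟩
  obtain ⟨γ', hγ', hlt, hJle⟩ := hub γ (hBu.1 hγ)
  refine ⟨g γ' hγ', hg γ' hγ', ?_⟩
  have s1 : f γ i < f γ' i := hBinc i (le_trans (le_max_left _ _) hi) hilt γ hγ γ' hγ' hlt
  have s2 : f γ' i < f (g γ' hγ') i :=
    hgt γ' hγ' i (le_trans hJle (le_trans (le_max_right _ _) hi)) hilt
  exact lt_trans s1 s2

/-- any two sets witnessing goodness give eventually equal pointwise suprema. -/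
theorem stmt_8 (lam : Cardinal) (hlam : lam.IsRegular) (hω : ℵ₀ < lam)
    (μ : Ordinal → Cardinal) (hμreg : ∀ i < lam.ord, (μ i).IsRegular)
    (α : Ordinal) (hcofα : lam < α.cof)
    (f : Ordinal → Ordinal → Ordinal)
    (hprod : ∀ β < α, ∀ i < lam.ord, f β i < (μ i).ord)
    (hinc : ∀ β γ, β < γ → γ < α → evLT lam.ord (f β) (f γ))
    (A B : Set Ordinal) (hA : GoodWit lam.ord α f A) (hB : GoodWit lam.ord α f B) :
    ∃ j < lam.ord, ∀ i, j ≤ i → i < lam.ord → ptSup f A i = ptSup f B i := by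
  obtain ⟨hAu, _, jA, hjA, hAinc⟩ := hA
  obtain ⟨hBu, _, jB, hjB, hBinc⟩ := hB
  have hα0 : 0 < α := pos_iff_ne_zero.2 (by
    rintro rfl; rw [Ordinal.cof_zero] at hcofα; exact (Cardinal.zero_le lam).not_gt hcofα)
  have hinc' : ∀ β γ, β < γ → γ < α → ∃ j < lam.ord, ∀ i, j ≤ i → i < lam.ord → f β i < f γ i :=
    fun β γ h1 h2 => hinc β γ h1 h2
  obtain ⟨j₁, hj₁, h₁⟩ := half_aux lam α hcofα f hinc' A B hAu hBu jB hjB hBinc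
  obtain ⟨j₂, hj₂, h₂⟩ := half_aux lam α hcofα f hinc' B A hBu hAu jA hjA hAinc
  refine ⟨max j₁ j₂, max_lt hj₁ hj₂, fun i hi hilt => ?_⟩
  have hd₁ : ∀ x ∈ (fun β => f β i) '' B, ∃ y ∈ (fun β => f β i) '' A, x < y := by
    rintro x ⟨γ, hγ, rfl⟩
    obtain ⟨β, hβ, hlt⟩ := h₁ i (le_trans (le_max_left _ _) hi) hilt γ hγ
    exact ⟨f β i, ⟨β, hβ, rfl⟩, hlt⟩
  have hd₂ : ∀ x ∈ (fun β => f β i) '' A, ∃ y ∈ (fun β => f β i) '' B, x < y := by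
    rintro x ⟨γ, hγ, rfl⟩
    obtain ⟨β, hβ, hlt⟩ := h₂ i (le_trans (le_max_right _ _) hi) hilt γ hγ
    exact ⟨f β i, ⟨β, hβ, rfl⟩, hlt⟩
  have hAne : ((fun β => f β i) '' A).Nonempty := by
    obtain ⟨γ, hγ, _⟩ := hAu.2 0 hα0
    exact ⟨f γ i, ⟨γ, hγ, rfl⟩⟩
  have hBne : ((fun β => f β i) '' B).Nonempty := by
    obtain ⟨γ, hγ, _⟩ := hBu.2 0 hα0
    exact ⟨f γ i, ⟨γ, hγ, rfl⟩⟩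
  unfold ptSup
  by_cases hbdd : BddAbove ((fun β => f β i) '' A)
  · have hbddB : BddAbove ((fun β => f β i) '' B) := by
      obtain ⟨u, hu⟩ := hbdd
      refine ⟨u, fun x hx => ?_⟩
      obtain ⟨y, hy, hxy⟩ := hd₁ x hx
      exact le_trans hxy.le (hu hy)
    refine le_antisymm (csSup_le hAne ?_) (csSup_le hBne ?_)
    · intro x hx
      obtain ⟨y, hy, hxy⟩ := hd₂ x hx
      exact le_trans hxy.le (le_csSup hbddB hy)
    · intro x hx
      obtain ⟨y, hy, hxy⟩ := hd₁ x hx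
      exact le_trans hxy.le (le_csSup hbdd hy)
  · have hbddB : ¬ BddAbove ((fun β => f β i) '' B) := by
      intro hBb
      apply hbdd
      obtain ⟨u, hu⟩ := hBb
      refine ⟨u, fun x hx => ?_⟩
      obtain ⟨y, hy, hxy⟩ := hd₂ x hx
      exact le_trans hxy.le (hu hy)
    rw [csSup_of_not_bddAbove hbdd, csSup_of_not_bddAbove hbddB]
end

section
/- Let λ be a regular uncountable cardinal and ⟨f_β : β < α⟩ a <*-increasing sequence in ∏_{i<λ} μ_i with cf(α) = λ. If C and D are clubs in α of order type λ, enumerated as C = ⟨β_i : i<λ⟩ and D = ⟨γ_i : i<λ⟩, then the diagonal suprema f^Δ_C(i) := sup_{j<i} f_{β_j}(i) and f^Δ_D(i) := sup_{j<i} f_{γ_j}(i) agree on a club: there is a club E ⊆ λ such that f^Δ_C(i) = f^Δ_D(i) for all i ∈ E. -/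
open Cardinal Set

/-- diagonal suprema along two clubs of order type `λ` agree on a club. -/
theorem stmt_9 (lam : Cardinal) (hlam : lam.IsRegular) (hω : ℵ₀ < lam)
    (μ : Ordinal → Cardinal) (hμreg : ∀ i < lam.ord, (μ i).IsRegular)
    (α : Ordinal) (hcofα : α.cof = lam)
    (f : Ordinal → Ordinal → Ordinal)
    (hprod : ∀ β < α, ∀ i < lam.ord, f β i < (μ i).ord)
    (hinc : ∀ β γ, β < γ → γ < α → evLT lam.ord (f β) (f γ))
    (b c : Ordinal → Ordinal)
    (hb : StrictMonoOn b (Set.Iio lam.ord)) (hc : StrictMonoOn c (Set.Iio lam.ord))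
    (hbC : IsClubOrd (b '' Set.Iio lam.ord) α) (hcD : IsClubOrd (c '' Set.Iio lam.ord) α) :
    ∃ E : Set Ordinal, IsClubOrd E lam.ord ∧ ∀ i ∈ E,
      sSup ((fun j => f (b j) i) '' Set.Iio i) =
        sSup ((fun j => f (c j) i) '' Set.Iio i) := by
  have hℵ : ℵ₀ ≤ lam := hω.le
  have hlim : Order.IsSuccLimit lam.ord := Cardinal.isSuccLimit_ord hℵ
  have hcof : lam.ord.cof = lam := hlam.cof_eq
  -- key interleaving + domination witnesses
  have key : ∀ (u v : Ordinal → Ordinal), StrictMonoOn u (Set.Iio lam.ord) →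
      IsClubOrd (u '' Set.Iio lam.ord) α → IsClubOrd (v '' Set.Iio lam.ord) α →
      ∀ j, ∃ m, j < lam.ord → m < lam.ord ∧
        ∃ j' < m, ∀ i, m ≤ i → i < lam.ord → f (u j) i < f (v j') i := by
    intro u v hu huC hvD j
    by_cases hj : j < lam.ord
    · have huj : u j < α := huC.1 ⟨j, hj, rfl⟩
      obtain ⟨γ, hγmem, hγgt⟩ := hvD.2.2 (u j) huj
      obtain ⟨j₁, hj₁, rfl⟩ := hγmem
      obtain ⟨w, hw, hwp⟩ := hinc (u j) (v j₁) hγgt (hvD.1 ⟨j₁, hj₁, rfl⟩)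
      refine ⟨(j₁ + 1) ⊔ w, fun _ => ⟨?_, j₁, ?_, fun i hmi hilt => ?_⟩⟩
      · exact max_lt (hlim.succ_lt hj₁) hw
      · exact lt_of_lt_of_le (Order.lt_succ j₁) (le_max_left _ _)
      · exact hwp i (le_trans (le_max_right _ _) hmi) hilt
    · exact ⟨0, fun h => absurd h hj⟩
  choose g hg using key b c hb hbC hcD
  choose g' hg' using key c b hc hcD hbC
  set E : Set Ordinal := {i | i < lam.ord ∧ ∀ j < i, g j < i ∧ g' j < i} with hE
  refine ⟨E, ⟨fun i hi => hi.1, ?_, ?_⟩, ?_⟩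
  · -- closed
    intro i hilt hlp
    refine ⟨hilt, fun j hji => ?_⟩
    obtain ⟨γ, hγE, hjγ, hγi⟩ := hlp.2 j hji
    exact ⟨lt_trans (hγE.2 j hjγ).1 hγi, lt_trans (hγE.2 j hjγ).2 hγi⟩
  · -- unbounded
    intro β hβ
    have step : ∀ x < lam.ord, (Ordinal.bsup x (fun j _ => (g j ⊔ g' j) + 1)) ⊔ (x + 1) < lam.ord := by
      intro x hx
      refine max_lt (Ordinal.bsup_lt_ord ?_ fun j hji => ?_) (hlim.succ_lt hx)
      · rw [hcof]; exact (Cardinal.lt_ord.1 hx)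
      · have hj : j < lam.ord := lt_trans hji hx
        exact hlim.succ_lt (max_lt (hg j hj).1 ((hg' j hj).1))
    set F : Ordinal → Ordinal := fun x => (Ordinal.bsup x (fun j _ => (g j ⊔ g' j) + 1)) ⊔ (x + 1)
      with hF
    set x : ℕ → Ordinal := fun n => F^[n] (β + 1) with hx
    have hxlt : ∀ n, x n < lam.ord := by
      intro n
      induction n with
      | zero => exact hlim.succ_lt hβ
      | succ n ih =>
        have : x (n + 1) = F (x n) := by rw [hx]; simp [Function.iterate_succ_apply']
        rw [this]; exact step _ ih
    have hxmono : ∀ n, x n < x (n + 1) := by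
      intro n
      have : x (n + 1) = F (x n) := by rw [hx]; simp [Function.iterate_succ_apply']
      rw [this]
      exact lt_of_lt_of_le (Order.lt_succ _) (le_max_right _ _)
    set γ : Ordinal := ⨆ n, x n with hγ
    have hxleγ : ∀ n, x n ≤ γ := fun n => le_ciSup Ordinal.bddAbove_of_small n
    have hγlt : γ < lam.ord := by
      refine Ordinal.iSup_lt_ord_lift ?_ hxlt
      rw [hcof, Cardinal.mk_denumerable, Cardinal.lift_aleph0]; exact hω
    refine ⟨γ, ⟨hγlt, fun j hjγ => ?_⟩, ?_⟩
    · obtain ⟨n, hn⟩ := (lt_ciSup_iff' Ordinal.bddAbove_of_small).1 hjγ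
      have hb1 : (g j ⊔ g' j) + 1 ≤ Ordinal.bsup (x n) (fun j _ => (g j ⊔ g' j) + 1) :=
        Ordinal.le_bsup _ j hn
      have hb2 : (g j ⊔ g' j) + 1 ≤ x (n + 1) := by
        have hxe : x (n + 1) = F (x n) := by rw [hx]; simp [Function.iterate_succ_apply']
        rw [hxe]; exact le_trans hb1 (le_max_left _ _)
      have hb3 : g j ⊔ g' j < γ :=
        lt_of_lt_of_le (lt_of_lt_of_le (Order.lt_succ _) hb2) (hxleγ (n + 1))
      exact ⟨lt_of_le_of_lt (le_max_left _ _) hb3, lt_of_le_of_lt (le_max_right _ _) hb3⟩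
    · exact lt_of_lt_of_le (Order.lt_succ β) (hxleγ 0)
  · -- the suprema agree on E
    intro i hiE
    have hilt : i < lam.ord := hiE.1
    have hdir : ∀ (u v : Ordinal → Ordinal) (h : Ordinal → Ordinal),
        (∀ j, j < lam.ord → h j < lam.ord ∧
          ∃ j' < h j, ∀ k, h j ≤ k → k < lam.ord → f (u j) k < f (v j') k) →
        (∀ j < i, h j < i) → (∀ j < lam.ord, v j < α) →
        sSup ((fun j => f (u j) i) '' Set.Iio i) ≤ sSup ((fun j => f (v j) i) '' Set.Iio i) := by
      intro u v h hh hcl hvα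
      have hbdd : BddAbove ((fun j => f (v j) i) '' Set.Iio i) := by
        refine ⟨(μ i).ord, ?_⟩
        rintro z ⟨j, hji, rfl⟩
        exact (hprod (v j) (hvα j (lt_trans hji hilt)) i hilt).le
      rcases Set.eq_empty_or_nonempty ((fun j => f (u j) i) '' Set.Iio i) with he | hne
      · rw [he, csSup_empty]; exact bot_le
      · refine csSup_le hne ?_
        rintro z ⟨j, hji, rfl⟩
        obtain ⟨_, j', hj'h, hdom⟩ := hh j (lt_trans hji hilt)
        have hhji : h j < i := hcl j hji
        have hlt : f (u j) i < f (v j') i := hdom i hhji.le hilt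
        have hmem : f (v j') i ∈ (fun j => f (v j) i) '' Set.Iio i :=
          ⟨j', lt_trans hj'h hhji, rfl⟩
        exact le_trans hlt.le (le_csSup hbdd hmem)
    exact le_antisymm
      (hdir b c g hg (fun j hj => (hiE.2 j hj).1) (fun j hj => hcD.1 ⟨j, hj, rfl⟩))
      (hdir c b g' hg' (fun j hj => (hiE.2 j hj).2) (fun j hj => hbC.1 ⟨j, hj, rfl⟩))
end

section
/- If a product ∏_{i<λ} μ_i on a singular cardinal κ of uncountable cofinality λ carries a good scale, then it carries a scale ⟨g_α : α < κ⁺⟩ such that every α < κ⁺ with cf(α) > λ is a good point of ⟨g_α⟩. -/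
open Cardinal Set

noncomputable def oRec (F : Ordinal → (Ordinal → Ordinal) → Ordinal) : Ordinal → Ordinal :=
  fun ξ => F ξ (fun ζ => if _ : ζ < ξ then oRec F ζ else 0)
termination_by ξ => ξ

theorem oRec_eq (F : Ordinal → (Ordinal → Ordinal) → Ordinal) (ξ : Ordinal) :
    oRec F ξ = F ξ (fun ζ => if _ : ζ < ξ then oRec F ζ else 0) := by
  rw [oRec]

theorem isLimit_of_lam_lt_cof {γ : Ordinal} {lam : Cardinal} (hlam : ℵ₀ ≤ lam)
    (h : lam < γ.cof) : Order.IsSuccLimit γ := by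
  rcases Ordinal.zero_or_succ_or_isSuccLimit γ with h0 | ⟨a, h0⟩ | h0
  · subst h0; rw [Ordinal.cof_zero] at h; exact absurd h (Cardinal.zero_le lam).not_gt
  · subst h0; rw [Ordinal.cof_succ] at h
    exact absurd h (le_trans (by norm_num) hlam).not_gt
  · exact h0

theorem enum_lemma (c : Cardinal) (hc : c.IsRegular) (S : Set Ordinal)
    (hsub : S ⊆ Set.Iio c.ord) (hunb : ∀ β < c.ord, ∃ γ ∈ S, β < γ) :
    StrictMono (Ordinal.enumOrd (S ∪ Set.Ici c.ord)) ∧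
      Ordinal.enumOrd (S ∪ Set.Ici c.ord) '' Set.Iio c.ord = S := by
  set S' := S ∪ Set.Ici c.ord with hS'
  have hbdd : ¬ BddAbove S' := by
    rintro ⟨b, hb⟩
    have h1 : max c.ord (b + 1) ∈ S' := Or.inr (Set.mem_Ici.2 (le_max_left _ _))
    have := hb h1
    have h2 : b + 1 ≤ max c.ord (b+1) := le_max_right _ _
    exact absurd (h2.trans this) (by simp)
  have hmono := Ordinal.enumOrd_strictMono hbdd
  have hlt : ∀ ξ < c.ord, Ordinal.enumOrd S' ξ < c.ord := by
    intro ξ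
    induction ξ using Ordinal.induction with
    | _ ξ IH =>
      intro hξ
      have hcard : ξ.card < (c.ord).cof := by
        rw [hc.cof_eq]; exact Cardinal.lt_ord.1 hξ
      have hbs : Ordinal.bsup ξ (fun ζ _ => Ordinal.enumOrd S' ζ) < c.ord :=
        Ordinal.bsup_lt_ord hcard (fun ζ hζ => IH ζ hζ (hζ.trans hξ))
      obtain ⟨γ, hγS, hγgt⟩ := hunb _ hbs
      have : Ordinal.enumOrd S' ξ ≤ γ := by
        apply Ordinal.enumOrd_le_of_forall_lt (Or.inl hγS)
        intro ζ hζ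
        exact lt_of_le_of_lt (Ordinal.le_bsup _ ζ hζ) hγgt
      exact lt_of_le_of_lt this (hsub hγS)
  refine ⟨hmono, ?_⟩
  apply Set.eq_of_subset_of_subset
  · rintro x ⟨ξ, hξ, rfl⟩
    rcases Ordinal.enumOrd_mem hbdd ξ with h | h
    · exact h
    · exact absurd (hlt ξ hξ) (not_lt.2 h)
  · intro x hx
    obtain ⟨ξ, hξ⟩ := Ordinal.enumOrd_surjective hbdd (Or.inl hx : x ∈ S')
    have hxlt : x < c.ord := hsub hx
    have : ξ < c.ord := lt_of_le_of_lt (hξ ▸ hmono.le_apply) hxlt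
    exact ⟨ξ, this, hξ⟩

theorem pigeon (o : Ordinal) (lam : Cardinal) (hlam : ℵ₀ ≤ lam) (hl : lam < o.cof)
    (m : Ordinal → Ordinal) (hm : ∀ ξ < o, m ξ < lam.ord) :
    ∃ j < lam.ord, ∀ β < o, ∃ ξ, ξ < o ∧ β < ξ ∧ m ξ ≤ j := by
  have holim : Order.IsSuccLimit o := isLimit_of_lam_lt_cof hlam hl
  by_contra hcon
  push_neg at hcon
  choose b hb1 hb2 using hcon
  have hbs : Ordinal.bsup lam.ord (fun j hj => b j hj + 1) < o := by
    apply Ordinal.bsup_lt_ord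
    · rwa [Cardinal.card_ord]
    · intro j hj
      exact holim.succ_lt (hb1 j hj)
  set ξ0 := Ordinal.bsup lam.ord (fun j hj => b j hj + 1) with hξ0
  have hm0 := hm ξ0 hbs
  have hble : b (m ξ0) hm0 < ξ0 :=
    lt_of_lt_of_le (lt_add_one _) (Ordinal.le_bsup (fun j hj => b j hj + 1) (m ξ0) hm0)
  exact lt_irrefl _ (hb2 (m ξ0) hm0 ξ0 hbs hble)

theorem key (lam : Cardinal) (hω : ℵ₀ < lam)
    (f : Ordinal → Ordinal → Ordinal) (γ : Ordinal)
    (hγcof : lam < γ.cof)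
    (C : Set Ordinal) (hCsub : C ⊆ Set.Iio γ) (hCunb : ∀ x < γ, ∃ c ∈ C, x < c)
    (A : Set Ordinal) (hA : GoodWit lam.ord γ f A)
    (hinc : ∀ x y, x < y → y < γ → evLT lam.ord (f x) (f y)) :
    ∃ B, B ⊆ C ∧ Unbdd B γ ∧ HasOtype B γ.cof.ord ∧
      ∃ j < lam.ord, ∀ i, j ≤ i → i < lam.ord →
        ∀ β ∈ B, ∀ δ ∈ B, β < δ → f β i < f δ i := by
  obtain ⟨⟨hAsub, hAunb⟩, ⟨eA, heA1, heA2⟩, j, hjlt, hj⟩ := hA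
  set θ := γ.cof with hθdef
  have hγlim : Order.IsSuccLimit γ := isLimit_of_lam_lt_cof hω.le hγcof
  have hθreg : θ.IsRegular := Cardinal.isRegular_cof hγlim
  have hθcof : (θ.ord).cof = θ := Ordinal.cof_cof γ
  -- choice functions
  have haex : ∀ x < γ, ∃ a, a ∈ A ∧ x < a := fun x hx => by
    obtain ⟨a, ha, hlt⟩ := hAunb x hx; exact ⟨a, ha, hlt⟩
  have hcex : ∀ x < γ, ∃ c, c ∈ C ∧ x < c := fun x hx => by
    obtain ⟨c, hc, hlt⟩ := hCunb x hx; exact ⟨c, hc, hlt⟩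
  classical
  set aAbove : Ordinal → Ordinal := fun x => if h : x < γ then (haex x h).choose else 0
    with haAdef
  have haA : ∀ x (h : x < γ), aAbove x ∈ A ∧ x < aAbove x := by
    intro x h
    simp only [haAdef, dif_pos h]
    exact (haex x h).choose_spec
  set cAbove : Ordinal → Ordinal := fun x => if h : x < γ then (hcex x h).choose else 0
    with hcAdef
  have hcA : ∀ x (h : x < γ), cAbove x ∈ C ∧ x < cAbove x := by
    intro x h
    simp only [hcAdef, dif_pos h]
    exact (hcex x h).choose_spec
  have heAmem : ∀ η < θ.ord, eA η ∈ A := by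
    intro η hη
    rw [heA2]; exact ⟨η, hη, rfl⟩
  -- the recursion
  set F : Ordinal → (Ordinal → Ordinal) → Ordinal := fun ξ prev =>
    cAbove (aAbove (max (Ordinal.bsup ξ (fun ζ _ => aAbove (prev ζ) + 1)) (eA ξ))) with hFdef
  set R : Ordinal → Ordinal := oRec F with hRdef
  set Sx : Ordinal → Ordinal :=
    fun ξ => max (Ordinal.bsup ξ (fun ζ _ => aAbove (R ζ) + 1)) (eA ξ) with hSxdef
  set bx : Ordinal → Ordinal := fun ξ => aAbove (Sx ξ) with hbxdef
  have hReq : ∀ ξ, R ξ = cAbove (bx ξ) := by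
    intro ξ
    have h1 : R ξ = F ξ (fun ζ => if _ : ζ < ξ then oRec F ζ else 0) := oRec_eq F ξ
    rw [h1]
    have h2 : Ordinal.bsup ξ
        (fun ζ _ => aAbove ((fun ζ => if _ : ζ < ξ then oRec F ζ else 0) ζ) + 1)
        = Ordinal.bsup ξ (fun ζ _ => aAbove (R ζ) + 1) := by
      congr 1
      funext ζ hζ
      simp only [dif_pos hζ, hRdef]
    simp only [hFdef]
    rw [h2]
  -- main induction: R ξ ∈ C
  have hRC : ∀ ξ, ξ < θ.ord → R ξ ∈ C := by
    intro ξ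
    induction ξ using Ordinal.induction with
    | _ ξ IH =>
      intro hξ
      have hbs : Ordinal.bsup ξ (fun ζ _ => aAbove (R ζ) + 1) < γ := by
        apply Ordinal.bsup_lt_ord
        · rw [← hθdef]; exact Cardinal.lt_ord.1 hξ
        · intro ζ hζ
          have hRζ : R ζ ∈ C := IH ζ hζ (hζ.trans hξ)
          have hRζγ : R ζ < γ := hCsub hRζ
          exact hγlim.succ_lt (hAsub (haA _ hRζγ).1)
      have hSxγ : Sx ξ < γ := max_lt hbs (hAsub (heAmem ξ hξ))
      have hbxγ : bx ξ < γ := hAsub (haA _ hSxγ).1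
      rw [hReq ξ]
      exact (hcA _ hbxγ).1
  -- derived facts for ξ < θ.ord
  have hSxγ : ∀ ξ < θ.ord, Sx ξ < γ := by
    intro ξ hξ
    have hbs : Ordinal.bsup ξ (fun ζ _ => aAbove (R ζ) + 1) < γ := by
      apply Ordinal.bsup_lt_ord
      · rw [← hθdef]; exact Cardinal.lt_ord.1 hξ
      · intro ζ hζ
        have hRζγ : R ζ < γ := hCsub (hRC ζ (hζ.trans hξ))
        exact hγlim.succ_lt (hAsub (haA _ hRζγ).1)
    exact max_lt hbs (hAsub (heAmem ξ hξ))
  have hbxA : ∀ ξ < θ.ord, bx ξ ∈ A := fun ξ hξ => (haA _ (hSxγ ξ hξ)).1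
  have hbxγ : ∀ ξ < θ.ord, bx ξ < γ := fun ξ hξ => hAsub (hbxA ξ hξ)
  have hSxbx : ∀ ξ < θ.ord, Sx ξ < bx ξ := fun ξ hξ => (haA _ (hSxγ ξ hξ)).2
  have hbxR : ∀ ξ < θ.ord, bx ξ < R ξ := by
    intro ξ hξ; rw [hReq ξ]; exact (hcA _ (hbxγ ξ hξ)).2
  have hRγ : ∀ ξ < θ.ord, R ξ < γ := fun ξ hξ => hCsub (hRC ξ hξ)
  have haRA : ∀ ξ < θ.ord, aAbove (R ξ) ∈ A := fun ξ hξ => (haA _ (hRγ ξ hξ)).1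
  have hRaR : ∀ ξ < θ.ord, R ξ < aAbove (R ξ) := fun ξ hξ => (haA _ (hRγ ξ hξ)).2
  have haζbξ : ∀ ζ ξ, ζ < ξ → ξ < θ.ord → aAbove (R ζ) < bx ξ := by
    intro ζ ξ hζξ hξ
    have h1 : aAbove (R ζ) + 1 ≤ Ordinal.bsup ξ (fun ζ _ => aAbove (R ζ) + 1) :=
      Ordinal.le_bsup _ ζ hζξ
    have h2 : aAbove (R ζ) < Sx ξ :=
      lt_of_lt_of_le (lt_add_one _) (h1.trans (le_max_left _ _))
    exact h2.trans (hSxbx ξ hξ)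
  have hRmono : ∀ ζ ξ, ζ < ξ → ξ < θ.ord → R ζ < R ξ := by
    intro ζ ξ hζξ hξ
    have := haζbξ ζ ξ hζξ hξ
    exact ((hRaR ζ (hζξ.trans hξ)).trans this).trans (hbxR ξ hξ)
  have heAR : ∀ ξ < θ.ord, eA ξ < R ξ := by
    intro ξ hξ
    exact lt_of_le_of_lt (le_max_right _ _) ((hSxbx ξ hξ).trans (hbxR ξ hξ))
  -- indices
  have hq : ∀ ξ (h : ξ < θ.ord), ∃ jq, jq < lam.ord ∧
      ∀ i, jq ≤ i → i < lam.ord → f (R ξ) i < f (aAbove (R ξ)) i := by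
    intro ξ h
    obtain ⟨jq, h1, h2⟩ := hinc (R ξ) (aAbove (R ξ)) (hRaR ξ h) (hAsub (haRA ξ h))
    exact ⟨jq, h1, h2⟩
  have hp : ∀ ξ (h : ξ < θ.ord), ∃ jp, jp < lam.ord ∧
      ∀ i, jp ≤ i → i < lam.ord → f (bx ξ) i < f (R ξ) i := by
    intro ξ h
    obtain ⟨jp, h1, h2⟩ := hinc (bx ξ) (R ξ) (hbxR ξ h) (hRγ ξ h)
    exact ⟨jp, h1, h2⟩
  choose q hq1 hq2 using hq
  choose p hp1 hp2 using hp
  set m : Ordinal → Ordinal := fun ξ => if h : ξ < θ.ord then max (q ξ h) (p ξ h) else 0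
    with hmdef
  have hm : ∀ ξ < θ.ord, m ξ < lam.ord := by
    intro ξ hξ
    simp only [hmdef, dif_pos hξ]
    exact max_lt (hq1 ξ hξ) (hp1 ξ hξ)
  have hlcof : lam < (θ.ord).cof := by rw [hθcof]; exact hγcof
  obtain ⟨jstar, hjstar, hU⟩ := pigeon θ.ord lam hω.le hlcof m hm
  set U : Set Ordinal := {ξ | ξ < θ.ord ∧ m ξ ≤ jstar} with hUdef
  obtain ⟨hu, huim⟩ := enum_lemma θ hθreg U (fun x hx => hx.1)
    (fun β hβ => by obtain ⟨ξ, h1, h2, h3⟩ := hU β hβ; exact ⟨ξ, ⟨h1, h3⟩, h2⟩)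
  set u : Ordinal → Ordinal := Ordinal.enumOrd (U ∪ Set.Ici θ.ord) with hudef
  have humem : ∀ ξ < θ.ord, u ξ ∈ U := by
    intro ξ hξ
    rw [← huim]; exact ⟨ξ, hξ, rfl⟩
  refine ⟨(fun ξ => R (u ξ)) '' Set.Iio θ.ord, ?_, ⟨?_, ?_⟩, ⟨fun ξ => R (u ξ), ?_, rfl⟩,
    max j jstar, ?_, ?_⟩
  · rintro x ⟨ξ, hξ, rfl⟩
    exact hRC _ (humem ξ hξ).1
  · rintro x ⟨ξ, hξ, rfl⟩
    exact hRγ _ (humem ξ hξ).1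
  · intro β hβ
    obtain ⟨a, haA', hβa⟩ := hAunb β hβ
    rw [heA2] at haA'
    obtain ⟨η, hη, rfl⟩ := haA'
    obtain ⟨ξ, hξθ, hηξ, _⟩ := hU η hη
    refine ⟨R (u ξ), ⟨ξ, hξθ, rfl⟩, ?_⟩
    have h1 : u ξ < θ.ord := (humem ξ hξθ).1
    have h2 : eA η ≤ eA (u ξ) := by
      rcases eq_or_lt_of_le (le_of_lt (lt_of_lt_of_le hηξ hu.le_apply)) with he | hlt'
      · exact le_of_eq (by rw [he])
      · exact le_of_lt (heA1 hη h1 hlt')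
    exact lt_of_lt_of_le hβa (h2.trans (heAR _ h1).le)
  · intro ξ hξ ξ' hξ' hlt'
    exact hRmono _ _ (hu hlt') (humem ξ' hξ').1
  · exact max_lt hjlt hjstar
  · rintro i hji hi x ⟨ξ, hξ, rfl⟩ y ⟨ξ', hξ', rfl⟩ hxy
    have h1 : u ξ < θ.ord := (humem ξ hξ).1
    have h2 : u ξ' < θ.ord := (humem ξ' hξ').1
    have huu : u ξ < u ξ' := by
      rcases lt_trichotomy (u ξ) (u ξ') with h | h | h
      · exact h
      · have hxy' : R (u ξ) < R (u ξ') := hxy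
        rw [h] at hxy'; exact absurd hxy' (lt_irrefl _)
      · have hxy' : R (u ξ) < R (u ξ') := hxy
        exact absurd (hRmono _ _ h h1) (not_lt.2 hxy'.le)
    have hmζ : max (q (u ξ) h1) (p (u ξ) h1) ≤ jstar := by
      have hbeta : m (u ξ) = q (u ξ) h1 ⊔ p (u ξ) h1 := dif_pos h1
      exact hbeta ▸ (humem ξ hξ).2
    have hmξ' : max (q (u ξ') h2) (p (u ξ') h2) ≤ jstar := by
      have hbeta : m (u ξ') = q (u ξ') h2 ⊔ p (u ξ') h2 := dif_pos h2
      exact hbeta ▸ (humem ξ' hξ').2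
    have step1 : f (R (u ξ)) i < f (aAbove (R (u ξ))) i :=
      hq2 (u ξ) h1 i (le_trans ((le_max_left _ _).trans (hmζ.trans (le_max_right j jstar))) hji) hi
    have step2 : f (aAbove (R (u ξ))) i < f (bx (u ξ')) i :=
      hj i (le_trans (le_max_left j jstar) hji) hi _ (haRA _ h1) _ (hbxA _ h2)
        (haζbξ _ _ huu h2)
    have step3 : f (bx (u ξ')) i < f (R (u ξ')) i :=
      hp2 (u ξ') h2 i (le_trans ((le_max_right _ _).trans (hmξ'.trans (le_max_right j jstar))) hji) hi
    exact (step1.trans step2).trans step3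

theorem not_bddAbove_union_Ici (S : Set Ordinal) (x : Ordinal) :
    ¬ BddAbove (S ∪ Set.Ici x) := by
  rintro ⟨b, hb⟩
  have h1 : max x (b + 1) ∈ S ∪ Set.Ici x := Or.inr (Set.mem_Ici.2 (le_max_left _ _))
  have := hb h1
  have h2 : b + 1 ≤ max x (b+1) := le_max_right _ _
  exact absurd (h2.trans this) (by simp)

/-- a product carrying a good scale carries a scale all of whose points of
cofinality `> λ` are good. -/
theorem stmt_11 (κ lam : Cardinal) (hlam : lam.IsRegular) (hω : ℵ₀ < lam)
    (hcof : κ.ord.cof = lam) (hlt : lam < κ)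
    (μ : Ordinal → Cardinal) (hμreg : ∀ i < lam.ord, (μ i).IsRegular)
    (hμmono : ∀ i j, i < j → j < lam.ord → μ i < μ j)
    (hμcof : sSup ((fun i => (μ i).ord) '' Set.Iio lam.ord) = κ.ord)
    (f : Ordinal → Ordinal → Ordinal)
    (hprod : ∀ α < (Order.succ κ).ord, ∀ i < lam.ord, f α i < (μ i).ord)
    (hinc : ∀ α β, α < β → β < (Order.succ κ).ord → evLT lam.ord (f α) (f β))
    (hcofinal : ∀ h : Ordinal → Ordinal, (∀ i < lam.ord, h i < (μ i).ord) →
      ∃ α < (Order.succ κ).ord, evLT lam.ord h (f α))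
    (hgood : ∃ D : Set Ordinal, IsClubOrd D (Order.succ κ).ord ∧
      ∀ α ∈ D, lam < α.cof → ∃ A, GoodWit lam.ord α f A) :
    ∃ g : Ordinal → Ordinal → Ordinal,
      (∀ α < (Order.succ κ).ord, ∀ i < lam.ord, g α i < (μ i).ord) ∧
      (∀ α β, α < β → β < (Order.succ κ).ord → evLT lam.ord (g α) (g β)) ∧
      (∀ h : Ordinal → Ordinal, (∀ i < lam.ord, h i < (μ i).ord) →
        ∃ α < (Order.succ κ).ord, evLT lam.ord h (g α)) ∧
      ∀ α < (Order.succ κ).ord, lam < α.cof → ∃ A, GoodWit lam.ord α g A := by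
  classical
  obtain ⟨D, hD, hDgood⟩ := hgood
  set kp := Order.succ κ with hkpdef
  have hk0 : ℵ₀ ≤ κ := hω.le.trans hlt.le
  have hkreg : kp.IsRegular := Cardinal.isRegular_succ hk0
  have hkord : Order.IsSuccLimit kp.ord := Cardinal.isSuccLimit_ord (hk0.trans (le_of_lt (Order.lt_succ κ)))
  obtain ⟨he, heim⟩ := enum_lemma kp hkreg D hD.1 hD.2.2
  set e : Ordinal → Ordinal := Ordinal.enumOrd (D ∪ Set.Ici kp.ord) with hedef
  have hememD : ∀ ξ < kp.ord, e ξ ∈ D := by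
    intro ξ hξ; rw [← heim]; exact ⟨ξ, hξ, rfl⟩
  have helt : ∀ ξ < kp.ord, e ξ < kp.ord := fun ξ hξ => hD.1 (hememD ξ hξ)
  -- closedness and normality
  have hclosed : IsClosed (D ∪ Set.Ici kp.ord) := by
    rw [Ordinal.isClosed_iff_iSup]
    intro ι hι g hg
    by_cases hall : ∀ i, g i ∈ D
    · have hbdd : BddAbove (Set.range g) := Ordinal.bddAbove_range g
      have hsup_le : ⨆ i, g i ≤ kp.ord := ciSup_le' (fun i => (hD.1 (hall i)).le)
      rcases eq_or_lt_of_le hsup_le with heq | hlt'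
      · exact Or.inr (le_of_eq heq.symm)
      · by_cases hmem : ∃ i, g i = ⨆ i, g i
        · obtain ⟨i, hi⟩ := hmem
          exact Or.inl (hi ▸ hall i)
        · push_neg at hmem
          left
          apply hD.2.1 _ hlt'
          have hstrict : ∀ i, g i < ⨆ i, g i :=
            fun i => lt_of_le_of_ne (le_ciSup hbdd i) (hmem i)
          obtain ⟨i0⟩ := hι
          constructor
          · exact lt_of_le_of_lt (zero_le (a := g i0)) (hstrict i0)
          · intro β hβ
            obtain ⟨i, hi⟩ := (Ordinal.lt_iSup_iff).1 hβ
            exact ⟨g i, hall i, hi, hstrict i⟩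
    · push_neg at hall
      obtain ⟨i, hi⟩ := hall
      have : g i ∈ Set.Ici kp.ord := (hg i).resolve_left hi
      exact Or.inr (le_trans this (le_ciSup (Ordinal.bddAbove_range g) i))
  have hnormal : Order.IsNormal e :=
    (Ordinal.enumOrd_isNormal_iff_isClosed (not_bddAbove_union_Ici D kp.ord)).2 hclosed
  refine ⟨fun α i => f (e α) i, ?_, ?_, ?_, ?_⟩
  · intro α hα i hi
    exact hprod (e α) (helt α hα) i hi
  · intro α β hαβ hβ
    exact hinc (e α) (e β) (he hαβ) (helt β hβ)
  · intro h hh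
    obtain ⟨α0, hα0, j1, hj1, hev1⟩ := hcofinal h hh
    have hsucc : α0 + 1 < kp.ord := hkord.succ_lt hα0
    have hlt2 : α0 < e (α0 + 1) := lt_of_lt_of_le (lt_add_one α0) he.le_apply
    obtain ⟨j2, hj2, hev2⟩ := hinc α0 (e (α0 + 1)) hlt2 (helt _ hsucc)
    refine ⟨α0 + 1, hsucc, max j1 j2, max_lt hj1 hj2, ?_⟩
    intro i hji hi
    exact lt_trans (hev1 i (le_trans (le_max_left _ _) hji) hi)
      (hev2 i (le_trans (le_max_right _ _) hji) hi)
  · intro α hα hcofα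
    have hαlim : Order.IsSuccLimit α := isLimit_of_lam_lt_cof hω.le hcofα
    have hcofeq : (e α).cof = α.cof := Ordinal.cof_map_of_isNormal hnormal hαlim
    obtain ⟨A, hA⟩ := hDgood (e α) (hememD α hα) (by rw [hcofeq]; exact hcofα)
    have hCsub : e '' Set.Iio α ⊆ Set.Iio (e α) := by
      rintro x ⟨ζ, hζ, rfl⟩
      exact he hζ
    have hCunb : ∀ x < e α, ∃ c ∈ e '' Set.Iio α, x < c := by
      intro x hx
      obtain ⟨ζ, hζ, hxζ⟩ := (hnormal.lt_iff_exists_lt hαlim).1 hx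
      exact ⟨e ζ, ⟨ζ, hζ, rfl⟩, hxζ⟩
    have hinc' : ∀ x y, x < y → y < e α → evLT lam.ord (f x) (f y) :=
      fun x y hxy hy => hinc x y hxy (hy.trans (helt α hα))
    obtain ⟨B, hBC, ⟨hBsub, hBunb⟩, ⟨v, hv1, hv2⟩, j, hjl, hjx⟩ :=
      key lam hω f (e α) (by rw [hcofeq]; exact hcofα)
        (e '' Set.Iio α) hCsub hCunb A hA hinc'
    rw [hcofeq] at hv1 hv2
    have hvB : ∀ ξ < α.cof.ord, v ξ ∈ B := by
      intro ξ hξ; rw [hv2]; exact ⟨ξ, hξ, rfl⟩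
    have hws : ∀ x, x ∈ B → ∃ ζ, ζ < α ∧ e ζ = x := by
      intro x hx
      obtain ⟨ζ, hζ, rfl⟩ := hBC hx
      exact ⟨ζ, hζ, rfl⟩
    set we : Ordinal → Ordinal := fun x => if h : x ∈ B then (hws x h).choose else 0
      with hwedef
    have hwe : ∀ x (h : x ∈ B), we x < α ∧ e (we x) = x := by
      intro x h
      simp only [hwedef, dif_pos h]
      exact (hws x h).choose_spec
    refine ⟨(fun ξ => we (v ξ)) '' Set.Iio α.cof.ord, ⟨?_, ?_⟩, ⟨fun ξ => we (v ξ), ?_, rfl⟩,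
      j, hjl, ?_⟩
    · rintro x ⟨ξ, hξ, rfl⟩
      exact (hwe _ (hvB ξ hξ)).1
    · intro β hβ
      have heβ : e β < e α := he hβ
      obtain ⟨x, hxB, hβx⟩ := hBunb (e β) heβ
      obtain ⟨ξ, hξ, rfl⟩ : x ∈ v '' Set.Iio α.cof.ord := hv2 ▸ hxB
      refine ⟨we (v ξ), ⟨ξ, hξ, rfl⟩, ?_⟩
      have := (hwe _ (hvB ξ hξ)).2
      rw [← this] at hβx
      exact he.lt_iff_lt.1 hβx
    · intro ξ hξ ξ' hξ' hlt'
      have h1 := (hwe _ (hvB ξ hξ)).2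
      have h2 := (hwe _ (hvB ξ' hξ')).2
      have : v ξ < v ξ' := hv1 hξ hξ' hlt'
      rw [← h1, ← h2] at this
      exact he.lt_iff_lt.1 this
    · rintro i hji hi x ⟨ξ, hξ, rfl⟩ y ⟨ξ', hξ', rfl⟩ hxy
      have h1 := (hwe _ (hvB ξ hξ)).2
      have h2 := (hwe _ (hvB ξ' hξ')).2
      have hvv : v ξ < v ξ' := by
        have := he.lt_iff_lt.2 hxy
        rwa [h1, h2] at this
      have := hjx i hji hi (v ξ) (hvB ξ hξ) (v ξ') (hvB ξ' hξ') hvv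
      show f (e (we (v ξ))) i < f (e (we (v ξ'))) i
      rwa [h1, h2]
end

section
/- Unboundedness via interleaving: Let κ be singular with cf(κ) = λ > ω, let ⟨f_β : β < κ⁺⟩ be a <*-increasing sequence on ∏_{i∈S} κ_i⁺ (S ⊆ λ stationary), let α have cf(α) > λ, and suppose f_α is an exact upper bound of ⟨f_β : β < α⟩. Let F be a function on S with F(i) an unbounded subset of f_α(i) for each i ∈ S. Then for every ᾱ < α there exists β with ᾱ < β < α and j < λ such that for all i ∈ S with i ≥ j, f_β(i) is a limit point of F(i), provided f_β is (eventually) the pointwise supremum of an ω-sequence interleaved with elements of the F(i)'s; more precisely, there exist ⟨α_n : n<ω⟩ in (ᾱ, α) whose supremum β satisfies: for all sufficiently large i ∈ S, f_β(i) = sup_n f_{α_n}(i) ∈ lim F(i). -/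
open Cardinal Set

/-- unboundedness of `C_F` via the interleaving argument. -/
theorem stmt_13 (κ lam : Cardinal) (hlam : lam.IsRegular) (hω : ℵ₀ < lam)
    (hcof : κ.ord.cof = lam)
    (k : Ordinal → Cardinal)
    (S : Set Ordinal) (hSsub : S ⊆ Set.Iio lam.ord) (hSstat : IsStat S lam.ord)
    (α : Ordinal) (hcofα : lam < α.cof)
    (f : Ordinal → Ordinal → Ordinal)
    (hprod : ∀ β ≤ α, ∀ i ∈ S, f β i < (Order.succ (k i)).ord)
    (hinc : ∀ β γ, β < γ → γ ≤ α → ∃ j < lam.ord, ∀ i ∈ S, j ≤ i → f β i < f γ i)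
    (heub : ∀ g : Ordinal → Ordinal,
      (∃ j < lam.ord, ∀ i ∈ S, j ≤ i → g i < f α i) →
      ∃ β < α, ∃ j < lam.ord, ∀ i ∈ S, j ≤ i → g i < f β i)
    (hcont : ∀ a : ℕ → Ordinal, StrictMono a → (∀ n, a n < α) →
      ∃ j < lam.ord, ∀ i ∈ S, j ≤ i →
        f (sSup (Set.range a)) i = sSup (Set.range fun n => f (a n) i))
    (F : Ordinal → Set Ordinal) (hF : ∀ i ∈ S, Unbdd (F i) (f α i)) :
    ∀ abar < α, ∃ a : ℕ → Ordinal, (∀ n, abar < a n ∧ a n < α) ∧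
      abar < sSup (Set.range a) ∧ sSup (Set.range a) < α ∧
      ∃ j < lam.ord, ∀ i ∈ S, j ≤ i →
        f (sSup (Set.range a)) i = sSup (Set.range fun n => f (a n) i) ∧
        IsLimPt (F i) (f (sSup (Set.range a)) i) := by
  classical
  intro abar habar
  have hαlim : Order.IsSuccLimit α := Ordinal.aleph0_le_cof.mp (le_of_lt (lt_trans hω hcofα))
  have hlampos : (0 : Ordinal) < lam.ord := by
    rw [← Cardinal.ord_zero]
    exact Cardinal.ord_lt_ord.2 hlam.pos
  set G : Ordinal → Ordinal → Ordinal := fun β i =>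
    if h : i ∈ S ∧ f β i < f α i then ((hF i h.1).2 (f β i) h.2).choose else 0 with hGdef
  have hG : ∀ β, ∀ i ∈ S, f β i < f α i →
      G β i ∈ F i ∧ f β i < G β i ∧ G β i < f α i := by
    intro β i hi hlt
    have h : i ∈ S ∧ f β i < f α i := ⟨hi, hlt⟩
    have hs := ((hF i h.1).2 (f β i) h.2).choose_spec
    have hEq : G β i = ((hF i h.1).2 (f β i) h.2).choose := by
      simp only [hGdef, dif_pos h]
    rw [hEq]
    exact ⟨hs.1, hs.2, (hF i hi).1 hs.1⟩
  have step : ∀ β < α, ∃ β', β < β' ∧ β' < α ∧ ∃ j < lam.ord,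
      ∀ i ∈ S, j ≤ i → f β i < G β i ∧ G β i ∈ F i ∧ G β i < f β' i := by
    intro β hβ
    obtain ⟨j1, hj1, hj1'⟩ := hinc β α hβ le_rfl
    obtain ⟨β'', hβ'', j2, hj2, hj2'⟩ := heub (G β) ⟨j1, hj1, fun i hi hij =>
      (hG β i hi (hj1' i hi hij)).2.2⟩
    set β' := max (Order.succ β) β'' with hβ'def
    have hβ'α : β' < α := max_lt (hαlim.succ_lt hβ) hβ''
    have hstep3 : ∃ j3 < lam.ord, ∀ i ∈ S, j3 ≤ i → f β'' i ≤ f β' i := by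
      rcases eq_or_lt_of_le (le_max_right (Order.succ β) β'') with h | h
      · exact ⟨0, hlampos, fun i _ _ => le_of_eq (congrArg (fun x => f x i) h)⟩
      · obtain ⟨j3, hj3, hj3'⟩ := hinc β'' β' h hβ'α.le
        exact ⟨j3, hj3, fun i hi hij => (hj3' i hi hij).le⟩
    obtain ⟨j3, hj3, hj3'⟩ := hstep3
    refine ⟨β', lt_of_lt_of_le (Order.lt_succ β) (le_max_left _ _), hβ'α,
      max j1 (max j2 j3), max_lt hj1 (max_lt hj2 hj3), ?_⟩
    intro i hi hij
    have hi1 : j1 ≤ i := le_trans (le_max_left _ _) hij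
    have hi2 : j2 ≤ i := le_trans (le_trans (le_max_left _ _) (le_max_right _ _)) hij
    have hi3 : j3 ≤ i := le_trans (le_trans (le_max_right _ _) (le_max_right _ _)) hij
    have hGi := hG β i hi (hj1' i hi hi1)
    exact ⟨hGi.2.1, hGi.1, lt_of_lt_of_le (hj2' i hi hi2) (hj3' i hi hi3)⟩
  have h0 : abar < Order.succ abar ∧ Order.succ abar < α :=
    ⟨Order.lt_succ abar, hαlim.succ_lt habar⟩
  let a' : ℕ → {β : Ordinal // abar < β ∧ β < α} := fun n =>
    Nat.rec (⟨Order.succ abar, h0⟩ : {β : Ordinal // abar < β ∧ β < α})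
      (fun _ p => ⟨(step p.1 p.2.2).choose,
        lt_trans p.2.1 (step p.1 p.2.2).choose_spec.1,
        (step p.1 p.2.2).choose_spec.2.1⟩) n
  let a : ℕ → Ordinal := fun n => (a' n).1
  have hmem : ∀ n, abar < a n ∧ a n < α := fun n => (a' n).2
  have hstep : ∀ n, a n < a (n+1) ∧ ∃ j < lam.ord, ∀ i ∈ S, j ≤ i →
      f (a n) i < G (a n) i ∧ G (a n) i ∈ F i ∧ G (a n) i < f (a (n+1)) i := by
    intro n
    have hs := (step (a n) (hmem n).2).choose_spec
    exact ⟨hs.1, hs.2.2⟩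
  have hamono : StrictMono a := strictMono_nat_of_lt_succ fun n => (hstep n).1
  have haα : ∀ n, a n < α := fun n => (hmem n).2
  obtain ⟨j0, hj0, hj0'⟩ := hcont a hamono haα
  choose jn hjn hjn' using fun n => (hstep n).2
  have hJ : (⨆ n, jn n) < lam.ord := by
    apply Ordinal.iSup_lt_ord_lift ?_ hjn
    rw [hlam.cof_eq]
    simpa using hω
  have hβα : sSup (Set.range a) < α := by
    have := Ordinal.iSup_lt_ord_lift (f := a) (c := α)
      (by simpa using lt_trans hω hcofα) haα
    exact this
  have hβab : abar < sSup (Set.range a) :=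
    lt_of_lt_of_le (hmem 0).1 (le_csSup (Ordinal.bddAbove_range a) ⟨0, rfl⟩)
  refine ⟨a, hmem, hβab, hβα, max j0 (⨆ n, jn n), max_lt hj0 hJ, ?_⟩
  intro i hi hij
  have heq := hj0' i hi (le_trans (le_max_left _ _) hij)
  have hjni : ∀ n, jn n ≤ i := fun n =>
    le_trans (le_trans (le_ciSup (Ordinal.bddAbove_range jn) n) (le_max_right _ _)) hij
  have key : ∀ n, f (a n) i < G (a n) i ∧ G (a n) i ∈ F i ∧ G (a n) i < f (a (n+1)) i :=
    fun n => hjn' n i hi (hjni n)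
  have hle : ∀ n, f (a n) i ≤ f (sSup (Set.range a)) i := by
    intro n
    rw [heq]
    exact le_csSup (Ordinal.bddAbove_range _) ⟨n, rfl⟩
  refine ⟨heq, lt_of_le_of_lt zero_le (lt_of_lt_of_le (key 0).2.2 (hle 1)), ?_⟩
  intro b hb
  rw [heq] at hb
  have hex : ∃ c ∈ Set.range (fun n => f (a n) i), b < c := by
    rw [← lt_csSup_iff (Ordinal.bddAbove_range _) ⟨f (a 0) i, ⟨0, rfl⟩⟩]
    exact hb
  obtain ⟨c, ⟨n, rfl⟩, hbc⟩ := hex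
  exact ⟨G (a n) i, (key n).2.1, lt_trans hbc (key n).1,
    lt_of_lt_of_le (key n).2.2 (hle (n+1))⟩
end

section
/- Order-type bound: Let κ be singular with cf(κ) = λ > ω such that τ^λ < κ for all τ < κ, let ⟨κ_i : i<λ⟩ be increasing cofinal in κ, and S ⊆ λ stationary. Let ⟨f_β : β < α⟩ be <*-increasing in ∏_{i∈S} κ_i⁺ and let F assign to each i ∈ S a set F(i) of ordinals with the property that for each i ∈ S there is j < i with ot(F(i)) < κ_j. Define C_F = {β < α : ∃j<λ ∀i∈S\j, f_β(i) ∈ F(i)} (taking limit points as membership if desired). Then |C_F| < κ; in particular ot(C_F) < κ. -/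
open Cardinal Set

/-- the order-type (and cardinality) bound for `C_F`. -/
theorem stmt_14 (κ lam : Cardinal) (hlam : lam.IsRegular) (hω : ℵ₀ < lam)
    (hcof : κ.ord.cof = lam) (hlt : lam < κ)
    (hpow : ∀ τ < κ, τ ^ lam < κ)
    (k : Ordinal → Cardinal)
    (hkmono : ∀ i j, i < j → j < lam.ord → k i < k j)
    (hkcof : sSup ((fun i => (k i).ord) '' Set.Iio lam.ord) = κ.ord)
    (S : Set Ordinal) (hSsub : S ⊆ Set.Iio lam.ord) (hSstat : IsStat S lam.ord)
    (α : Ordinal) (f : Ordinal → Ordinal → Ordinal)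
    (hprod : ∀ β < α, ∀ i ∈ S, f β i < (Order.succ (k i)).ord)
    (hinc : ∀ β γ, β < γ → γ < α → ∃ j < lam.ord, ∀ i ∈ S, j ≤ i → f β i < f γ i)
    (F : Ordinal → Set Ordinal)
    (hFot : ∀ i ∈ S, ∃ j < i, ∃ ξ < (k j).ord, HasOtype (F i) ξ) :
    #↥{β | β < α ∧ ∃ j < lam.ord, ∀ i ∈ S, j ≤ i → f β i ∈ F i} < κ ∧
      ∃ ξ < κ.ord,
        HasOtype {β | β < α ∧ ∃ j < lam.ord, ∀ i ∈ S, j ≤ i → f β i ∈ F i} ξ := by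

  classical
  set L := lam.ord with hLdef
  have hω' : ℵ₀ ≤ lam := le_of_lt hω
  have hLlim : Order.IsSuccLimit L := Cardinal.isSuccLimit_ord hω'
  have hcofL : L.cof = lam := hlam.cof_eq
  -- totalize hFot
  have hFot' : ∀ i, ∃ j ξ e, i ∈ S →
      j < i ∧ ξ < (k j).ord ∧ StrictMonoOn e (Set.Iio ξ) ∧ F i = e '' Set.Iio ξ := by
    intro i
    by_cases h : i ∈ S
    · obtain ⟨j, hj, ξ, hξ, e, he, hFe⟩ := hFot i h
      exact ⟨j, ξ, e, fun _ => ⟨hj, hξ, he, hFe⟩⟩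
    · exact ⟨0, 0, fun x => x, fun h' => absurd h' h⟩
  choose jf ξf ef hjf using hFot'
  -- weak Fodor: some j₀ bounds jf on an unbounded subset of S
  have hfodor : ∃ j₀, j₀ < L ∧ ∀ x, x < L → ∃ i, i ∈ S ∧ x < i ∧ jf i ≤ j₀ := by
    by_contra hcon
    push_neg at hcon
    have hbex : ∀ j₀, ∃ x, j₀ < L → (x < L ∧ ∀ i, i ∈ S → x < i → j₀ < jf i) := by
      intro j₀
      by_cases h : j₀ < L
      · obtain ⟨x, hx, hx2⟩ := hcon j₀ h
        exact ⟨x, fun _ => ⟨hx, hx2⟩⟩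
      · exact ⟨0, fun h' => absurd h' h⟩
    choose b hb using hbex
    set C : Set Ordinal := {x | x < L ∧ ∀ j, j < x → b j < x} with hCdef
    have hclub : IsClubOrd C L := by
      refine ⟨fun x hx => hx.1, ?_, ?_⟩
      · rintro a haL ⟨-, hlp⟩
        refine ⟨haL, fun j hj => ?_⟩
        obtain ⟨γ, hγC, hjγ, hγa⟩ := hlp j hj
        exact lt_trans (hγC.2 j hjγ) hγa
      · intro β hβ
        set s : ℕ → Ordinal :=
          fun n => Nat.recAux (β + 1) (fun _ x => max (x + 1) (Ordinal.bsup.{u_1+1,u_1+1} x fun j _ => b j + 1)) n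
          with hsdef
        have hs0 : s 0 = β + 1 := rfl
        have hssucc : ∀ n, s (n + 1) = max (s n + 1) (Ordinal.bsup (s n) fun j _ => b j + 1) :=
          fun n => rfl
        have hsL : ∀ n, s n < L := by
          intro n
          induction n with
          | zero => exact hLlim.succ_lt hβ
          | succ n ih =>
            rw [hssucc]
            refine max_lt (hLlim.succ_lt ih) (Ordinal.bsup_lt_ord ?_ ?_)
            · rw [hcofL]
              exact Cardinal.lt_ord.1 ih
            · intro j hj
              exact hLlim.succ_lt ((hb j (lt_trans hj ih)).1)
        have hsmono : ∀ n, s n < s (n + 1) := by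
          intro n
          rw [hssucc]
          exact lt_of_lt_of_le (Order.lt_succ _) (le_max_left _ _)
        have hγL : (⨆ n, s n) < L := by
          refine Ordinal.iSup_lt_ord_lift ?_ hsL
          rw [hcofL, Cardinal.mk_nat, Cardinal.lift_aleph0]
          exact hω
        refine ⟨⨆ n, s n, ⟨hγL, ?_⟩, lt_of_lt_of_le (Order.lt_succ β) ?_⟩
        · intro j hj
          obtain ⟨n, hn⟩ := Ordinal.lt_iSup_iff.1 hj
          have h1 : b j + 1 ≤ Ordinal.bsup.{u_1+1,u_1+1} (s n) fun j _ => b j + 1 :=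
            Ordinal.le_bsup.{u_1+1,u_1+1} (fun j _ => b j + 1) j hn
          have h2 : b j < s (n + 1) := by
            rw [hssucc]
            exact lt_of_lt_of_le (lt_of_lt_of_le (Order.lt_succ _) h1) (le_max_right _ _)
          exact lt_of_lt_of_le h2 (Ordinal.le_iSup s (n + 1))
        · have h0 := Ordinal.le_iSup s 0
          rw [hs0, Ordinal.add_one_eq_succ] at h0
          exact h0
    obtain ⟨i, hiS, hiC⟩ := hSstat C hclub
    have hiL : i < L := hSsub hiS
    have hji : jf i < i := (hjf i hiS).1
    have hbji : b (jf i) < i := hiC.2 (jf i) hji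
    exact absurd ((hb (jf i) (lt_trans hji hiL)).2 i hiS hbji) (lt_irrefl _)
  obtain ⟨j₀, hj₀L, hT⟩ := hfodor
  set c : Ordinal := (k j₀).ord + 1 with hcdef
  have hcpos : (0 : Ordinal) < c := by
    rw [hcdef, Ordinal.add_one_eq_succ]
    exact lt_of_le_of_lt zero_le (Order.lt_succ _)
  -- choose inverses
  have hinvex : ∀ i x, ∃ η, η < c ∧ (i ∈ S → jf i ≤ j₀ → x ∈ F i → ef i η = x) := by
    intro i x
    by_cases h : i ∈ S ∧ jf i ≤ j₀ ∧ x ∈ F i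
    · obtain ⟨hS', hjle, hxF⟩ := h
      obtain ⟨hji, hξ, hesm, hFe⟩ := hjf i hS'
      rw [hFe] at hxF
      obtain ⟨η, hη, hefη⟩ := hxF
      have hkle : (k (jf i)).ord ≤ (k j₀).ord := by
        rcases eq_or_lt_of_le hjle with h' | h'
        · rw [h']
        · exact le_of_lt (Cardinal.ord_lt_ord.2 (hkmono _ _ h' hj₀L))
      refine ⟨η, ?_, fun _ _ _ => hefη⟩
      have : η < (k j₀).ord := lt_of_lt_of_le (lt_trans hη hξ) hkle
      rw [hcdef, Ordinal.add_one_eq_succ]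
      exact lt_trans this (Order.lt_succ _)
    · exact ⟨0, hcpos, fun h1 h2 h3 => absurd ⟨h1, h2, h3⟩ h⟩
  choose g hgc hge using hinvex
  set CF := {β | β < α ∧ ∃ j < L, ∀ i ∈ S, j ≤ i → f β i ∈ F i} with hCFdef
  -- key distinguishing lemma
  have key : ∀ β₁ β₂ : Ordinal, β₁ ∈ CF → β₂ ∈ CF → β₁ < β₂ →
      ∃ i, i < L ∧ g i (f β₁ i) ≠ g i (f β₂ i) := by
    rintro β₁ β₂ ⟨hβ₁lt, j₁, hj₁L, hj₁⟩ ⟨hβ₂lt, j₂, hj₂L, hj₂⟩ hlt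
    obtain ⟨j₃, hj₃L, hj₃⟩ := hinc β₁ β₂ hlt hβ₂lt
    have hmax : max j₁ (max j₂ j₃) < L := max_lt hj₁L (max_lt hj₂L hj₃L)
    obtain ⟨i, hiS, hbig, hjle⟩ := hT _ hmax
    have hiL : i < L := hSsub hiS
    have h1 : f β₁ i ∈ F i := hj₁ i hiS (le_of_lt (lt_of_le_of_lt (le_max_left _ _) hbig))
    have h2 : f β₂ i ∈ F i := hj₂ i hiS
      (le_of_lt (lt_of_le_of_lt (le_trans (le_max_left _ _) (le_max_right _ _)) hbig))
    have h3 : f β₁ i < f β₂ i := hj₃ i hiS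
      (le_of_lt (lt_of_le_of_lt (le_trans (le_max_right _ _) (le_max_right _ _)) hbig))
    refine ⟨i, hiL, fun hc => ?_⟩
    have e1 : ef i (g i (f β₁ i)) = f β₁ i := hge i _ hiS hjle h1
    have e2 : ef i (g i (f β₂ i)) = f β₂ i := hge i _ hiS hjle h2
    rw [hc, e2] at e1
    exact absurd e1 (ne_of_gt h3)
  -- the injection into a function space
  set Φ : CF → (L.ToType → c.ToType) := fun β x =>
    Ordinal.ToType.mk (o := c)
      ⟨g (((Ordinal.ToType.mk (o := L)).symm x : Set.Iio L) : Ordinal)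
         (f (β : Ordinal) (((Ordinal.ToType.mk (o := L)).symm x : Set.Iio L) : Ordinal)),
       hgc _ _⟩ with hΦdef
  have hΦinj : Function.Injective Φ := by
    rintro ⟨β₁, hβ₁⟩ ⟨β₂, hβ₂⟩ hEq
    by_contra hne
    have hne' : β₁ ≠ β₂ := fun h => hne (Subtype.ext h)
    rcases lt_or_gt_of_ne hne' with h | h
    · obtain ⟨i, hiL, hgne⟩ := key β₁ β₂ hβ₁ hβ₂ h
      apply hgne
      have := congrFun hEq (Ordinal.ToType.mk (o := L) ⟨i, hiL⟩)
      rw [hΦdef] at this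
      simp only [OrderIso.symm_apply_apply] at this
      exact congrArg Subtype.val ((Ordinal.ToType.mk (o := c)).injective this)
    · obtain ⟨i, hiL, hgne⟩ := key β₂ β₁ hβ₂ hβ₁ h
      apply hgne
      have := congrFun hEq.symm (Ordinal.ToType.mk (o := L) ⟨i, hiL⟩)
      rw [hΦdef] at this
      simp only [OrderIso.symm_apply_apply] at this
      exact congrArg Subtype.val ((Ordinal.ToType.mk (o := c)).injective this)
  -- cardinality bound
  have hk0 : k j₀ < κ := by
    have hsucc : j₀ + 1 < L := by
      rw [Ordinal.add_one_eq_succ]; exact hLlim.succ_lt hj₀L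
    have hmem : (k (j₀ + 1)).ord ∈ (fun i => (k i).ord) '' Set.Iio L :=
      Set.mem_image_of_mem _ hsucc
    have hbdd : BddAbove ((fun i => (k i).ord) '' Set.Iio L) := by
      by_contra h
      have h0 : sSup ((fun i => (k i).ord) '' Set.Iio L) = sSup (∅ : Set Ordinal) :=
        csSup_of_not_bddAbove h
      rw [hkcof, csSup_empty] at h0
      have : (0 : Ordinal) < κ.ord := by
        rw [Cardinal.lt_ord, Ordinal.card_zero]
        exact lt_trans (lt_trans Cardinal.aleph0_pos hω) hlt
      rw [h0] at this
      exact absurd this (lt_irrefl _)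
    have hle : (k (j₀ + 1)).ord ≤ κ.ord := by
      rw [← hkcof]; exact le_csSup hbdd hmem
    have : (k j₀).ord < κ.ord :=
      lt_of_lt_of_le (Cardinal.ord_lt_ord.2
        (hkmono j₀ (j₀ + 1) (lt_of_lt_of_le (Order.lt_succ _) (Ordinal.add_one_eq_succ j₀).ge)
          hsucc)) hle
    exact Cardinal.ord_lt_ord.1 this
  have hτ : k j₀ + 1 < κ := by
    rcases le_or_gt ℵ₀ (k j₀) with h | h
    · rw [Cardinal.add_one_eq h]; exact hk0
    · exact lt_trans (lt_trans (Cardinal.add_lt_aleph0 h Cardinal.one_lt_aleph0) hω) hlt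
  have hcard : #CF < κ := by
    have h1 : #CF ≤ #(L.ToType → c.ToType) := Cardinal.mk_le_of_injective hΦinj
    have h2 : #(L.ToType → c.ToType) = c.card ^ L.card := by
      rw [← Cardinal.power_def, Cardinal.mk_toType, Cardinal.mk_toType]
    have h3 : c.card = k j₀ + 1 := by
      rw [hcdef, Ordinal.add_one_eq_succ, Ordinal.card_succ, Cardinal.card_ord]
    have h4 : L.card = lam := Cardinal.card_ord lam
    rw [h2, h3, h4] at h1
    exact lt_of_le_of_lt h1 (hpow _ hτ)
  refine ⟨hcard, ?_⟩
  -- order type bound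
  set r := Subrel ((· < ·) : Ordinal → Ordinal → Prop) (· ∈ CF) with hrdef
  refine ⟨Ordinal.type r, ?_, ?_⟩
  · rw [Cardinal.lt_ord, Ordinal.card_type]
    exact hcard
  · refine ⟨fun o => if h : o < Ordinal.type r then
        ((Ordinal.enum r ⟨o, h⟩ : CF) : Ordinal) else 0, ?_, ?_⟩
    · intro x hx y hy hxy
      have hx' : x < Ordinal.type r := hx
      have hy' : y < Ordinal.type r := hy
      dsimp only
      rw [dif_pos hx', dif_pos hy']
      exact (Ordinal.enum r).map_rel_iff.2 hxy
    · ext x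
      simp only [Set.mem_image, Set.mem_Iio]
      constructor
      · intro hx
        refine ⟨Ordinal.typein r ⟨x, hx⟩, Ordinal.typein_lt_type r _, ?_⟩
        rw [dif_pos (Ordinal.typein_lt_type r ⟨x, hx⟩)]
        exact congrArg Subtype.val (Ordinal.enum_typein r ⟨x, hx⟩)
      · rintro ⟨o, ho, rfl⟩
        rw [dif_pos ho]
        exact (Ordinal.enum r ⟨o, ho⟩).2
end

section
/- Partial coherence propagation: Suppose ⟨C_α : α ∈ Σ⟩ is a sequence of closed subsets of ordinals (C_α ⊆ α closed in α) with the property that whenever γ ∈ lim C_α ∩ lim C_β and cf(γ) ≠ μ, then C_α ∩ γ = C_β ∩ γ. Then full coherence holds: whenever γ ∈ lim C_α ∩ lim C_β (regardless of cf(γ)), C_α ∩ γ = C_β ∩ γ, provided that for γ of cofinality μ one can choose a strictly increasing continuous sequence ⟨γ_ξ : ξ < μ⟩ converging to γ with both C_α and C_β meeting every interval (γ_ξ, γ_{ξ+1}), so that each γ_η for limit η is a common limit point of C_α and C_β of cofinality < μ. -/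
open Cardinal Set

/-- coherence at limit points of cofinality `≠ μ` propagates to full coherence. -/
theorem stmt_16 (μ : Cardinal) (hμ : μ.IsRegular) (hω : ℵ₀ < μ)
    (Sig : Set Ordinal) (C : Ordinal → Set Ordinal)
    (hsub : ∀ α ∈ Sig, C α ⊆ Set.Iio α)
    (hclosed : ∀ α ∈ Sig, ∀ γ < α, IsLimPt (C α) γ → γ ∈ C α)
    (hcoh : ∀ α ∈ Sig, ∀ β ∈ Sig, ∀ γ, IsLimPt (C α) γ → IsLimPt (C β) γ →
      γ.cof ≠ μ → C α ∩ Set.Iio γ = C β ∩ Set.Iio γ)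
    (hseq : ∀ α ∈ Sig, ∀ β ∈ Sig, ∀ γ, IsLimPt (C α) γ → IsLimPt (C β) γ →
      γ.cof = μ →
      ∃ g : Ordinal → Ordinal, StrictMonoOn g (Set.Iio μ.ord) ∧
        (∀ ξ < μ.ord, Order.IsSuccLimit ξ → g ξ = sSup (g '' Set.Iio ξ)) ∧
        sSup (g '' Set.Iio μ.ord) = γ ∧
        (∀ ξ, ξ + 1 < μ.ord → (C α ∩ Set.Ioo (g ξ) (g (ξ + 1))).Nonempty ∧
          (C β ∩ Set.Ioo (g ξ) (g (ξ + 1))).Nonempty) ∧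
        ∀ η < μ.ord, Order.IsSuccLimit η → (g η).cof < μ) :
    ∀ α ∈ Sig, ∀ β ∈ Sig, ∀ γ, IsLimPt (C α) γ → IsLimPt (C β) γ →
      C α ∩ Set.Iio γ = C β ∩ Set.Iio γ := by
  intro α hα β hβ γ hlα hlβ
  by_cases hcf : γ.cof = μ
  swap
  · exact hcoh α hα β hβ γ hlα hlβ hcf
  obtain ⟨g, hmono, hcont, hsup, hmeet, hcofs⟩ := hseq α hα β hβ γ hlα hlβ hcf
  have hω' : (Ordinal.omega0 : Ordinal) < μ.ord := by
    rw [Cardinal.lt_ord, Ordinal.card_omega0]; exact hω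
  have h0 : (0 : Ordinal) < μ.ord := (pos_iff_ne_zero.mpr Ordinal.omega0_ne_zero).trans hω'
  -- coherence below g η for limit η
  have key : ∀ η < μ.ord, Order.IsSuccLimit η → C α ∩ Set.Iio (g η) = C β ∩ Set.Iio (g η) := by
    intro η hη hlim
    have limpt : ∀ D : Set Ordinal,
        (∀ ξ, ξ + 1 < μ.ord → (D ∩ Set.Ioo (g ξ) (g (ξ + 1))).Nonempty) →
        IsLimPt D (g η) := by
      intro D hD
      constructor
      · exact lt_of_le_of_lt (zero_le : (0 : Ordinal) ≤ g 0) (hmono h0 hη hlim.pos)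
      · intro b hb
        rw [hcont η hη hlim] at hb
        have hne : (g '' Set.Iio η).Nonempty := ⟨g 0, ⟨0, hlim.pos, rfl⟩⟩
        obtain ⟨_, ⟨ξ, hξ, rfl⟩, hbξ⟩ := exists_lt_of_lt_csSup hne hb
        have hξ1 : ξ + 1 < η := hlim.add_one_lt hξ
        have hξ1' : ξ + 1 < μ.ord := hξ1.trans hη
        obtain ⟨c, hcD, hc1, hc2⟩ := hD ξ hξ1'
        exact ⟨c, hcD, hbξ.trans hc1, hc2.trans (hmono hξ1' hη hξ1)⟩
    have hA : IsLimPt (C α) (g η) := limpt (C α) (fun ξ h => (hmeet ξ h).1)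
    have hB : IsLimPt (C β) (g η) := limpt (C β) (fun ξ h => (hmeet ξ h).2)
    exact hcoh α hα β hβ (g η) hA hB (ne_of_lt (hcofs η hη hlim))
  -- each x < γ is below some g η with η limit
  have below : ∀ x < γ, ∃ η < μ.ord, Order.IsSuccLimit η ∧ x < g η := by
    intro x hx
    rw [← hsup] at hx
    have hne : (g '' Set.Iio μ.ord).Nonempty := ⟨g 0, ⟨0, h0, rfl⟩⟩
    obtain ⟨_, ⟨ξ, hξ, rfl⟩, hxξ⟩ := exists_lt_of_lt_csSup hne hx
    refine ⟨ξ + Ordinal.omega0, ?_, Ordinal.isSuccLimit_add ξ Ordinal.isSuccLimit_omega0, ?_⟩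
    · show ξ + Ordinal.omega0 < μ.ord
      rw [Cardinal.lt_ord, Ordinal.card_add, Ordinal.card_omega0]
      exact Cardinal.add_lt_of_lt hω.le (Cardinal.lt_ord.mp hξ) hω
    · refine hxξ.trans (hmono hξ ?h ?g)
      case h =>
        show ξ + Ordinal.omega0 < μ.ord
        rw [Cardinal.lt_ord, Ordinal.card_add, Ordinal.card_omega0]
        exact Cardinal.add_lt_of_lt hω.le (Cardinal.lt_ord.mp hξ) hω
      case g => exact lt_add_of_pos_right ξ Ordinal.omega0_pos
  ext x
  constructor
  · rintro ⟨hx, hxγ⟩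
    obtain ⟨η, hη, hlim, hxη⟩ := below x hxγ
    have := key η hη hlim
    have : x ∈ C β ∩ Set.Iio (g η) := this ▸ ⟨hx, hxη⟩
    exact ⟨this.1, hxγ⟩
  · rintro ⟨hx, hxγ⟩
    obtain ⟨η, hη, hlim, hxη⟩ := below x hxγ
    have := (key η hη hlim).symm
    have : x ∈ C α ∩ Set.Iio (g η) := this ▸ ⟨hx, hxη⟩
    exact ⟨this.1, hxγ⟩
end

section
/- Distributivity transfer: If τ is a regular cardinal, ℙ is a forcing poset of size ≤ τ, and ℚ is a τ⁺-distributive forcing poset, then ℙ forces that ℚ (i.e., its image in the extension) is τ⁺-distributive. -/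
open Cardinal Set

universe u

/-- if `|P| ≤ τ` and `Q` is `τ⁺`-distributive, then `P` forces `Q` to be
`τ⁺`-distributive.  Here `R i p` is the set of `q` such that `p` forces `q` to belong
to the `P`-name for the `i`-th dense open subset of `Q` in the extension. -/
theorem stmt_18 {P Q : Type u} [Preorder P] [Preorder Q] (τ : Cardinal.{u})
    (hτ : τ.IsRegular) (hP : #P ≤ τ)
    (hQdistrib : ∀ (ι : Type u) (D : ι → Set Q), #ι ≤ τ →
      (∀ i, (∀ q, ∃ q' ≤ q, q' ∈ D i) ∧ (∀ q ∈ D i, ∀ q' ≤ q, q' ∈ D i)) →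
      ∀ q, ∃ q' ≤ q, ∀ i, q' ∈ D i)
    (ι : Type u) (hι : #ι ≤ τ) (R : ι → P → Set Q)
    (hmono : ∀ i (p p' : P), p' ≤ p → ∀ q, q ∈ R i p → q ∈ R i p')
    (hopen : ∀ i (p : P), ∀ q ∈ R i p, ∀ q' ≤ q, q' ∈ R i p)
    (hdense : ∀ i (p : P) (q : Q), ∃ p' ≤ p, ∃ q' ≤ q, q' ∈ R i p')
    (hforced : ∀ i (p : P) (q : Q),
      (∀ p' ≤ p, ∃ p'' ≤ p', q ∈ R i p'') → q ∈ R i p) :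
    ∀ (p : P) (q : Q), ∃ q' ≤ q, ∀ i, q' ∈ R i p := by
  intro p q
  set D : ι × P → Set Q := fun ip => {r | ∃ p'' ≤ ip.2, r ∈ R ip.1 p''} with hD
  have hcard : #(ι × P) ≤ τ := by
    have : #(ι × P) = #ι * #P := by
      rw [Cardinal.mk_prod, Cardinal.lift_id, Cardinal.lift_id]
    rw [this]
    calc #ι * #P ≤ τ * τ := mul_le_mul' hι hP
    _ = τ := Cardinal.mul_eq_self hτ.aleph0_le
  have hdo : ∀ ip, (∀ r, ∃ r' ≤ r, r' ∈ D ip) ∧ (∀ r ∈ D ip, ∀ r' ≤ r, r' ∈ D ip) := by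
    intro ⟨i, p'⟩
    constructor
    · intro r
      obtain ⟨p'', hp'', r', hr', hmem⟩ := hdense i p' r
      exact ⟨r', hr', p'', hp'', hmem⟩
    · rintro r ⟨p'', hp'', hmem⟩ r' hr'
      exact ⟨p'', hp'', hopen i p'' r hmem r' hr'⟩
  obtain ⟨q', hq', hall⟩ := hQdistrib (ι × P) D hcard hdo q
  refine ⟨q', hq', fun i => hforced i p q' fun p' _ => ?_⟩
  obtain ⟨p'', hp'', hmem⟩ := hall (i, p')
  exact ⟨p'', hp'', hmem⟩
end
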